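/- Let α and β be real numbers with 0 < α, 0 < β, α + β < π, and α ≠ β. Set p = cos((α+β)/2)/cos((α−β)/2) and q = −sin((α−β)/2)/sin((α+β)/2). Suppose x₁ ∈ {−p, −1/q}, x₂ ∈ {1/p, −q}, x₃ ∈ {p, 1/q}, and x₄ ∈ {−1/p, q}. Then x₁·x₂·x₃·x₄ = 1 if and only if either (x₁, x₂, x₃, x₄) = (−p, 1/p, p, −1/p) or (x₁, x₂, x₃, x₄) = (−1/q, −q, 1/q, q). -/

import Mathlib

open Real

/-- Key step in the second proof of Theorem 4(c): for the flat-foldable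
rotationally-symmetric quadrilateral tessellation with folding multipliers
`p = cos((α+β)/2)/cos((α−β)/2)` and `q = −sin((α−β)/2)/sin((α+β)/2)`, the product of
the four folding-multiplier ratios around a tile equals 1 exactly for the two
"all-mode-1" and "all-mode-2" choices; hence the tessellation has exactly two
rigidly-foldable modes. -/
theorem flat_foldable_tile_two_modes
    (α β : ℝ) (hα : 0 < α) (hβ : 0 < β) (hαβ : α + β < π) (hne : α ≠ β)
    (p q : ℝ) (hp : p = cos ((α + β) / 2) / cos ((α - β) / 2))
    (hq : q = -sin ((α - β) / 2) / sin ((α + β) / 2))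
    (x₁ x₂ x₃ x₄ : ℝ)
    (h₁ : x₁ ∈ ({-p, -1/q} : Set ℝ)) (h₂ : x₂ ∈ ({1/p, -q} : Set ℝ))
    (h₃ : x₃ ∈ ({p, 1/q} : Set ℝ)) (h₄ : x₄ ∈ ({-1/p, q} : Set ℝ)) :
    x₁ * x₂ * x₃ * x₄ = 1 ↔
      (x₁, x₂, x₃, x₄) = (-p, 1/p, p, -1/p) ∨
        (x₁, x₂, x₃, x₄) = (-1/q, -q, 1/q, q) := by
  set S := (α + β) / 2 with hS
  set D := (α - β) / 2 with hD
  have hS1 : 0 < S := by positivity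
  have hS2 : S < π / 2 := by rw [hS]; linarith
  have hD1 : -(π/2) < D := by rw [hD]; linarith
  have hD2 : D < π / 2 := by rw [hD]; linarith
  have hcS : 0 < cos S := cos_pos_of_mem_Ioo ⟨by linarith, hS2⟩
  have hsS : 0 < sin S := sin_pos_of_pos_of_lt_pi hS1 (by linarith [pi_pos])
  have hcD : 0 < cos D := cos_pos_of_mem_Ioo ⟨hD1, hD2⟩
  have hsD : sin D ≠ 0 := by
    intro h
    have : D = 0 := by
      rcases (sin_eq_zero_iff_of_lt_of_lt (by linarith [pi_pos]) (by linarith [pi_pos])).1 h with h0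
      exact h0
    apply hne; rw [hD] at this; linarith
  have hp0 : p ≠ 0 := by
    rw [hp]; positivity
  have hq0 : q ≠ 0 := by
    rw [hq]; exact div_ne_zero (neg_ne_zero.2 hsD) (ne_of_gt hsS)
  -- sin α = sin (S + D) > 0, sin β = sin (S - D) > 0
  have hsaddα : S + D = α := by rw [hS, hD]; ring
  have hsaddβ : S - D = β := by rw [hS, hD]; ring
  have hsinα : 0 < sin S * cos D + cos S * sin D := by
    rw [← sin_add, hsaddα]; exact sin_pos_of_pos_of_lt_pi hα (by linarith)
  have hsinβ : 0 < sin S * cos D - cos S * sin D := by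
    rw [← sin_sub, hsaddβ]; exact sin_pos_of_pos_of_lt_pi hβ (by linarith)
  have hpq1 : p * q ≠ 1 := by
    rw [hp, hq]
    intro h
    field_simp at h
    nlinarith
  have hpq2 : p * q ≠ -1 := by
    rw [hp, hq]
    intro h
    field_simp at h
    nlinarith
  have e1 : -p ≠ -1/q := by
    intro h; apply hpq1
    field_simp at h
    linarith
  have e2 : (1:ℝ)/p ≠ -q := by
    intro h; apply hpq2
    field_simp at h
    nlinarith [h]
  have e3 : p ≠ 1/q := by
    intro h; apply hpq1
    field_simp at h
    linarith
  have e4 : -1/p ≠ q := by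
    intro h; apply hpq2
    field_simp at h
    nlinarith [h]
  clear hp hq hsinα hsinβ hsaddα hsaddβ hcS hsS hcD hsD hS1 hS2 hD1 hD2
  simp only [Set.mem_insert_iff, Set.mem_singleton_iff] at h₁ h₂ h₃ h₄
  rcases h₁ with rfl | rfl <;> rcases h₂ with rfl | rfl <;>
    rcases h₃ with rfl | rfl <;> rcases h₄ with rfl | rfl <;>
    simp only [Prod.mk.injEq, e1, e2, e3, e4, e1.symm, e2.symm, e3.symm, e4.symm,
      false_and, and_false, true_and, and_true, or_false, false_or, or_self,
      iff_false, iff_true] <;>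
    (try field_simp) <;>
    (try intro h) <;>
    first
      | linarith
      | exact hpq1 h
      | exact hpq1 (by linarith)
      | exact hpq2 (by linarith)
      | exact hpq2 (mul_left_cancel₀ hp0 (by linear_combination -h))
      | exact hpq2 (mul_left_cancel₀ hq0 (by linear_combination -h))
      | exact (mul_self_eq_one_iff.1
            (show (x₃ * x₄) * (x₃ * x₄) = 1 by linear_combination h)).elim hpq1 hpq2
      | exact (mul_self_eq_one_iff.1
            (show (p * q) * (p * q) = 1 by linear_combination -h)).elim hpq1 hpq2
      | exact (mul_eq_zero.1
            (show x₃ * x₄ = (0:ℝ) by linear_combination (-1/2 : ℝ) * h)).elim hp0 hq0
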